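/- Let Γ be a set, let X ⊆ ℝ^Γ be C-embedded in ℝ^Γ, let τ be an infinite cardinal, and let φ : X → ℝ^τ be a continuous map. Then there exists a subset B ⊆ Γ with |B| ≤ τ such that φ factors through the restricted projection π_B|X : X → π_B(X); that is, there is a continuous map h : π_B(X) → ℝ^τ with φ = h ∘ (π_B|X), where π_B : ℝ^Γ → ℝ^B is the coordinate projection. -/

import Mathlib

open Set

universe u v

set_option maxHeartbeats 1000000

namespace Proof11

/-- Countability of pairwise-incompatible families of finite "conditions". -/
theorem countable_aux {Γ : Type u} {V : Type*} [DecidableEq Γ] [DecidableEq V] [Countable V]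
    (D : V → V → Prop) :
    ∀ n : ℕ, ∀ P : Set (Finset (Γ × V)),
      (∀ s ∈ P, s.card ≤ n) →
      (∀ s ∈ P, ∀ γ v w, (γ, v) ∈ s → (γ, w) ∈ s → ¬ D v w) →
      (∀ s ∈ P, ∀ t ∈ P, s ≠ t → ∃ γ v w, (γ, v) ∈ s ∧ (γ, w) ∈ t ∧ D v w) →
      P.Countable := by
  intro n
  induction n with
  | zero =>
    intro P hcard _ _
    have : P ⊆ {∅} := by
      intro s hs
      have := hcard s hs
      simp only [Nat.le_zero, Finset.card_eq_zero] at this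
      simp [this]
    exact (Set.countable_singleton _).mono this
  | succ n ih =>
    intro P hcard hself hpair
    -- Claim: for every γ and nonempty fiber-shape T', the set of conditions whose fiber
    -- at γ is exactly T'.image (γ, ·) is countable.
    have claim : ∀ (γ : Γ) (T' : Finset V), T'.Nonempty →
        {s | s ∈ P ∧ s.filter (fun e => e.1 = γ) = T'.image (fun v => (γ, v))}.Countable := by
      intro γ T' hT'
      set T : Finset (Γ × V) := T'.image (fun v => (γ, v)) with hT
      have hTne : T.Nonempty := hT'.image _
      set Q : Set (Finset (Γ × V)) := {s | s ∈ P ∧ s.filter (fun e => e.1 = γ) = T} with hQ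
      -- every member of Q contains T
      have hTsub : ∀ s ∈ Q, T ⊆ s := by
        intro s hs
        rw [← hs.2]
        exact Finset.filter_subset _ _
      -- the map s ↦ s \ T is injective on Q
      have hinj : Set.InjOn (fun s => s \ T) Q := by
        intro s hs t ht hst
        have hsT := hTsub s hs
        have htT := hTsub t ht
        have hst' : s \ T = t \ T := hst
        have : (s \ T) ∪ T = (t \ T) ∪ T := by rw [hst']
        rwa [Finset.sdiff_union_of_subset hsT, Finset.sdiff_union_of_subset htT] at this
      -- witnesses for distinct members of Q are away from γ
      have hwit : ∀ s ∈ Q, ∀ t ∈ Q, s ≠ t →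
          ∃ γ' v w, (γ', v) ∈ s \ T ∧ (γ', w) ∈ t \ T ∧ D v w := by
        intro s hs t ht hst
        obtain ⟨γ', v, w, hv, hw, hD⟩ := hpair s hs.1 t ht.1 hst
        have hγ' : γ' ≠ γ := by
          rintro rfl
          -- then (γ', w) ∈ t's fiber = T ⊆ s, contradicting hself
          have hwT : (γ', w) ∈ T := by
            rw [← ht.2]
            exact Finset.mem_filter.2 ⟨hw, rfl⟩
          exact hself s hs.1 γ' v w hv (hTsub s hs hwT) hD
        refine ⟨γ', v, w, ?_, ?_, hD⟩
        · refine Finset.mem_sdiff.2 ⟨hv, ?_⟩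
          intro hmem
          rw [hT] at hmem
          obtain ⟨v', -, hv'⟩ := Finset.mem_image.1 hmem
          exact hγ' ((Prod.ext_iff.1 hv').1.symm)
        · refine Finset.mem_sdiff.2 ⟨hw, ?_⟩
          intro hmem
          rw [hT] at hmem
          obtain ⟨v', -, hv'⟩ := Finset.mem_image.1 hmem
          exact hγ' ((Prod.ext_iff.1 hv').1.symm)
      -- apply IH to the image family
      have hQ' : ((fun s => s \ T) '' Q).Countable := by
        apply ih
        · rintro s' ⟨s, hs, rfl⟩
          show (s \ T).card ≤ n
          have h1 : T.card ≤ s.card := Finset.card_le_card (hTsub s hs)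
          have h2 : (s \ T).card = s.card - T.card := Finset.card_sdiff_of_subset (hTsub s hs)
          have h3 : s.card ≤ n + 1 := hcard s hs.1
          have h4 : 1 ≤ T.card := Finset.card_pos.2 hTne
          omega
        · rintro s' ⟨s, hs, rfl⟩
          intro γ' v w hv hw
          exact hself s hs.1 γ' v w (Finset.mem_sdiff.1 hv).1 (Finset.mem_sdiff.1 hw).1
        · rintro s' ⟨s, hs, rfl⟩ t' ⟨t, ht, rfl⟩ hst
          have : s ≠ t := by rintro rfl; exact hst rfl
          exact hwit s hs t ht this
      exact Set.countable_of_injective_of_countable_image hinj hQ'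
    -- slices: conditions mentioning a given coordinate
    have slice : ∀ γ : Γ, {s | s ∈ P ∧ ∃ w, (γ, w) ∈ s}.Countable := by
      intro γ
      have hsub : {s | s ∈ P ∧ ∃ w, (γ, w) ∈ s} ⊆
          ⋃ T' : {T : Finset V // T.Nonempty},
            {s | s ∈ P ∧ s.filter (fun e => e.1 = γ) = (T' : Finset V).image (fun v => (γ, v))} := by
        intro s hs
        obtain ⟨hsP, w, hw⟩ := hs
        set F := s.filter (fun e => e.1 = γ) with hF
        have hwF : (γ, w) ∈ F := Finset.mem_filter.2 ⟨hw, rfl⟩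
        have hne : (F.image Prod.snd).Nonempty := ⟨w, Finset.mem_image.2 ⟨(γ, w), hwF, rfl⟩⟩
        refine Set.mem_iUnion.2 ⟨⟨F.image Prod.snd, hne⟩, hsP, ?_⟩
        ext e
        simp only [Finset.mem_image, Finset.mem_filter, ← hF]
        constructor
        · intro he
          have he1 : e.1 = γ := (Finset.mem_filter.1 he).2
          exact ⟨e.2, ⟨e, he, rfl⟩, by rw [← he1]⟩
        · rintro ⟨v, hv, rfl⟩
          obtain ⟨e', he', he'2⟩ := hv
          have he'1 : e'.1 = γ := (Finset.mem_filter.1 he').2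
          have : e' = (γ, v) := by
            ext
            · exact he'1
            · exact he'2
          rwa [← this]
      refine Set.Countable.mono hsub (Set.countable_iUnion fun T' => claim γ T' T'.2)
    -- conclude
    rcases P.eq_empty_or_nonempty with hP | ⟨s₀, hs₀⟩
    · simp [hP]
    have hsub : P ⊆ insert s₀ (⋃ e ∈ s₀, {s | s ∈ P ∧ ∃ w, (e.1, w) ∈ s}) := by
      intro s hs
      by_cases h : s = s₀
      · exact h ▸ Set.mem_insert _ _
      · obtain ⟨γ, v, w, hv, hw, -⟩ := hpair s₀ hs₀ s hs (Ne.symm h)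
        exact Set.mem_insert_iff.2 (Or.inr (Set.mem_biUnion hv ⟨hs, w, hw⟩))
    refine Set.Countable.mono hsub ?_
    exact Set.Countable.insert _ (Set.Countable.biUnion s₀.countable_toSet fun e _ => slice e.1)

/-- Any family of finite conditions that is pairwise incompatible is countable. -/
theorem countable_incomp {Γ : Type u} {V : Type*} [DecidableEq Γ] [DecidableEq V] [Countable V]
    (D : V → V → Prop) (P : Set (Finset (Γ × V)))
    (hself : ∀ s ∈ P, ∀ γ v w, (γ, v) ∈ s → (γ, w) ∈ s → ¬ D v w)
    (hpair : ∀ s ∈ P, ∀ t ∈ P, s ≠ t → ∃ γ v w, (γ, v) ∈ s ∧ (γ, w) ∈ t ∧ D v w) :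
    P.Countable := by
  have : P = ⋃ n : ℕ, {s ∈ P | s.card ≤ n} := by
    ext s
    simp only [Set.mem_iUnion, Set.mem_setOf_eq]
    exact ⟨fun h => ⟨s.card, h, le_rfl⟩, fun ⟨n, h, _⟩ => h⟩
  rw [this]
  refine Set.countable_iUnion fun n => countable_aux D n _ (fun s hs => hs.2)
    (fun s hs => hself s hs.1) (fun s hs t ht hst => hpair s hs.1 t ht.1 hst)

/-- rational open intervals -/
abbrev Vt := {q : ℚ × ℚ // q.1 < q.2}

/-- syntactic disjointness of rational intervals -/
def Disj (v w : Vt) : Prop := v.1.2 ≤ w.1.1 ∨ w.1.2 ≤ v.1.1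

/-- the basic "cylinder" subset of `ℝ^Γ` described by a finite condition -/
def ES {Γ : Type u} (s : Finset (Γ × Vt)) : Set (Γ → ℝ) :=
  {x | ∀ e ∈ s, ((e.2 : ℚ × ℚ).1 : ℝ) < x e.1 ∧ x e.1 < ((e.2 : ℚ × ℚ).2 : ℝ)}

lemma ES_anti {Γ : Type u} {s t : Finset (Γ × Vt)} (h : s ⊆ t) : ES t ⊆ ES s :=
  fun _ hx e he => hx e (h he)

lemma not_disj_of_mem {Γ : Type u} {s : Finset (Γ × Vt)} {x : Γ → ℝ} (hx : x ∈ ES s)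
    {γ : Γ} {v w : Vt} (hv : (γ, v) ∈ s) (hw : (γ, w) ∈ s) : ¬ Disj v w := by
  obtain ⟨h1, h2⟩ := hx _ hv
  obtain ⟨h3, h4⟩ := hx _ hw
  rintro (h | h)
  · have : ((v.1.2 : ℚ) : ℝ) ≤ ((w.1.1 : ℚ) : ℝ) := by exact_mod_cast h
    simp only at h1 h2 h3 h4
    linarith
  · have : ((w.1.2 : ℚ) : ℝ) ≤ ((v.1.1 : ℚ) : ℝ) := by exact_mod_cast h
    simp only at h1 h2 h3 h4
    linarith

lemma key_lt {Γ : Type u} {s t : Finset (Γ × Vt)} {x y : Γ → ℝ}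
    (hx : x ∈ ES s) (hy : y ∈ ES t)
    (hcompat : ∀ γ v w, (γ, v) ∈ s → (γ, w) ∈ t → ¬ Disj v w)
    {γ : Γ} {v w : Vt} (hv : (γ, v) ∈ s ∨ (γ, v) ∈ t) (hw : (γ, w) ∈ s ∨ (γ, w) ∈ t) :
    v.1.1 < w.1.2 := by
  rcases hv with hv | hv <;> rcases hw with hw | hw
  · have h1 := (hx _ hv).1
    have h2 := (hx _ hw).2
    simp only at h1 h2
    exact_mod_cast h1.trans h2
  · have := hcompat γ v w hv hw
    rw [Disj, not_or, not_le, not_le] at this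
    exact this.2
  · have := hcompat γ w v hw hv
    rw [Disj, not_or, not_le, not_le] at this
    exact this.1
  · have h1 := (hy _ hv).1
    have h2 := (hy _ hw).2
    simp only at h1 h2
    exact_mod_cast h1.trans h2

lemma compat_inter {Γ : Type u} [DecidableEq Γ] {s t : Finset (Γ × Vt)} {x y : Γ → ℝ}
    (hx : x ∈ ES s) (hy : y ∈ ES t)
    (hcompat : ∀ γ v w, (γ, v) ∈ s → (γ, w) ∈ t → ¬ Disj v w) :
    (ES s ∩ ES t).Nonempty := by
  classical
  have hex : ∀ γ : Γ, ∃ r : ℝ, ∀ v : Vt, ((γ, v) ∈ s ∨ (γ, v) ∈ t) →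
      ((v.1.1 : ℚ) : ℝ) < r ∧ r < ((v.1.2 : ℚ) : ℝ) := by
    intro γ
    set P : Finset Vt := ((s ∪ t).filter (fun e => e.1 = γ)).image (fun e => e.2) with hP
    have hmemP : ∀ v : Vt, v ∈ P ↔ ((γ, v) ∈ s ∨ (γ, v) ∈ t) := by
      intro v
      simp only [hP, Finset.mem_image, Finset.mem_filter, Finset.mem_union]
      constructor
      · rintro ⟨e, ⟨he, rfl⟩, rfl⟩
        exact he
      · intro h
        exact ⟨(γ, v), ⟨h, rfl⟩, rfl⟩
    by_cases hne : P.Nonempty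
    · set L : Finset ℚ := P.image (fun v => v.1.1) with hL
      set R : Finset ℚ := P.image (fun v => v.1.2) with hR
      have hLne : L.Nonempty := hne.image _
      have hRne : R.Nonempty := hne.image _
      have hmax : L.max' hLne < R.min' hRne := by
        rw [Finset.max'_lt_iff]
        intro l hl
        rw [Finset.lt_min'_iff]
        intro r hr
        rw [hL] at hl
        rw [hR] at hr
        obtain ⟨v', hv', rfl⟩ := Finset.mem_image.1 hl
        obtain ⟨w', hw', rfl⟩ := Finset.mem_image.1 hr
        exact key_lt hx hy hcompat ((hmemP v').1 hv') ((hmemP w').1 hw')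
      refine ⟨(((L.max' hLne + R.min' hRne) / 2 : ℚ) : ℝ), ?_⟩
      intro v hv
      have hvP : v ∈ P := (hmemP v).2 hv
      have h1 : v.1.1 ≤ L.max' hLne :=
        Finset.le_max' L v.1.1 (by rw [hL]; exact Finset.mem_image.2 ⟨v, hvP, rfl⟩)
      have h2 : R.min' hRne ≤ v.1.2 :=
        Finset.min'_le R v.1.2 (by rw [hR]; exact Finset.mem_image.2 ⟨v, hvP, rfl⟩)
      have hq1 : v.1.1 < (L.max' hLne + R.min' hRne) / 2 := by linarith
      have hq2 : (L.max' hLne + R.min' hRne) / 2 < v.1.2 := by linarith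
      exact ⟨by exact_mod_cast hq1, by exact_mod_cast hq2⟩
    · refine ⟨0, fun v hv => absurd ⟨v, (hmemP v).2 hv⟩ hne⟩
  choose z hzb using hex
  refine ⟨z, ?_, ?_⟩
  · intro e he
    exact hzb e.1 e.2 (Or.inl he)
  · intro e he
    exact hzb e.1 e.2 (Or.inr he)

lemma exists_cond {Γ : Type u} {g : (Γ → ℝ) → ℝ} (hg : Continuous g) (x : Γ → ℝ)
    {ε : ℝ} (hε : 0 < ε) :
    ∃ s : Finset (Γ × Vt), x ∈ ES s ∧ ∀ y ∈ ES s, |g y - g x| < ε := by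
  classical
  have hO : IsOpen (g ⁻¹' Metric.ball (g x) ε) := hg.isOpen_preimage _ Metric.isOpen_ball
  have hxO : x ∈ g ⁻¹' Metric.ball (g x) ε := by
    simp [Metric.mem_ball, hε]
  obtain ⟨I, u, hu, hsub⟩ := isOpen_pi_iff.1 hO x hxO
  have hch : ∀ γ ∈ I, ∃ q : Vt, ((q.1.1 : ℚ) : ℝ) < x γ ∧ x γ < ((q.1.2 : ℚ) : ℝ) ∧
      Set.Ioo ((q.1.1 : ℚ) : ℝ) ((q.1.2 : ℚ) : ℝ) ⊆ u γ := by
    intro γ hγ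
    obtain ⟨hopen, hmem⟩ := hu γ hγ
    obtain ⟨δ, hδ, hball⟩ := Metric.isOpen_iff.1 hopen (x γ) hmem
    obtain ⟨a, ha1, ha2⟩ := exists_rat_btwn (show x γ - δ < x γ by linarith)
    obtain ⟨b, hb1, hb2⟩ := exists_rat_btwn (show x γ < x γ + δ by linarith)
    have hab : (a : ℚ) < b := by exact_mod_cast ha2.trans hb1
    refine ⟨⟨(a, b), hab⟩, ha2, hb1, ?_⟩
    intro r hr
    apply hball
    rw [Real.ball_eq_Ioo]
    exact ⟨by obtain ⟨h1, h2⟩ := hr; simp only at h1 h2 ⊢; linarith,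
           by obtain ⟨h1, h2⟩ := hr; simp only at h1 h2 ⊢; linarith⟩
  choose q hq1 hq2 hq3 using hch
  refine ⟨I.attach.image (fun p => (p.1, q p.1 p.2)), ?_, ?_⟩
  · intro e he
    obtain ⟨p, -, rfl⟩ := Finset.mem_image.1 he
    exact ⟨hq1 p.1 p.2, hq2 p.1 p.2⟩
  · intro y hy
    have hyO : y ∈ g ⁻¹' Metric.ball (g x) ε := by
      apply hsub
      intro γ hγ
      have hmem : (γ, q γ hγ) ∈ I.attach.image (fun p => (p.1, q p.1 p.2)) :=
        Finset.mem_image.2 ⟨⟨γ, hγ⟩, Finset.mem_attach _ _, rfl⟩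
      obtain ⟨h1, h2⟩ := hy _ hmem
      exact hq3 γ hγ ⟨h1, h2⟩
    simpa [Metric.mem_ball, Real.dist_eq] using hyO

/-- Every continuous real function on `ℝ^Γ` depends on countably many coordinates. -/
theorem exists_countable_dep {Γ : Type u} (g : (Γ → ℝ) → ℝ) (hg : Continuous g) :
    ∃ A : Set Γ, A.Countable ∧ ∀ x y : Γ → ℝ, (∀ γ ∈ A, x γ = y γ) → g x = g y := by
  classical
  set S : ℕ → Set (Finset (Γ × Vt)) := fun n =>
    {s | (ES s).Nonempty ∧ ∀ y ∈ ES s, ∀ z ∈ ES s, |g y - g z| ≤ ((n : ℝ) + 1)⁻¹} with hS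
  have hmax : ∀ n : ℕ, ∃ 𝒱 : Set (Finset (Γ × Vt)),
      𝒱 ⊆ S n ∧ (∀ s ∈ 𝒱, ∀ t ∈ 𝒱, s ≠ t → Disjoint (ES s) (ES t)) ∧
      ∀ W ∈ S n, ∃ s ∈ 𝒱, (ES W ∩ ES s).Nonempty := by
    intro n
    set C : Set (Set (Finset (Γ × Vt))) :=
      {𝒲 : Set (Finset (Γ × Vt)) | 𝒲 ⊆ S n ∧
        ∀ s ∈ 𝒲, ∀ t ∈ 𝒲, s ≠ t → Disjoint (ES s) (ES t)} with hC
    have hchainub : ∀ c ⊆ C, IsChain (· ⊆ ·) c → ∃ ub ∈ C, ∀ s ∈ c, s ⊆ ub := by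
      intro c hcsub hchain
      refine ⟨⋃₀ c, ⟨?_, ?_⟩, fun s hs => Set.subset_sUnion_of_mem hs⟩
      · intro s hs
        obtain ⟨𝒲, h𝒲c, hs𝒲⟩ := hs
        exact (hcsub h𝒲c).1 hs𝒲
      · intro s hs t ht hst
        obtain ⟨𝒲₁, h1c, hs1⟩ := hs
        obtain ⟨𝒲₂, h2c, ht2⟩ := ht
        by_cases heq : 𝒲₁ = 𝒲₂
        · exact (hcsub h2c).2 s (heq ▸ hs1) t ht2 hst
        · rcases hchain h1c h2c heq with hle | hle
          · exact (hcsub h2c).2 s (hle hs1) t ht2 hst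
          · exact (hcsub h1c).2 s hs1 t (hle ht2) hst
    obtain ⟨𝒱, h𝒱⟩ := zorn_subset C hchainub
    · obtain ⟨h1, h2⟩ := h𝒱.prop
      refine ⟨𝒱, h1, h2, ?_⟩
      intro W hW
      by_contra hcon
      push_neg at hcon
      have hWint : insert W 𝒱 ∈
          {𝒲 : Set (Finset (Γ × Vt)) | 𝒲 ⊆ S n ∧
            ∀ s ∈ 𝒲, ∀ t ∈ 𝒲, s ≠ t → Disjoint (ES s) (ES t)} := by
        constructor
        · intro s hs
          rcases Set.mem_insert_iff.1 hs with rfl | hs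
          · exact hW
          · exact h1 hs
        · intro s hs t ht hst
          have hd : ∀ u ∈ 𝒱, Disjoint (ES W) (ES u) := fun u hu =>
            Set.disjoint_iff_inter_eq_empty.2 (hcon u hu)
          rcases Set.mem_insert_iff.1 hs with hsW | hs𝒱 <;>
            rcases Set.mem_insert_iff.1 ht with htW | ht𝒱
          · exact absurd (hsW.trans htW.symm) hst
          · exact hsW ▸ hd t ht𝒱
          · exact htW ▸ (hd s hs𝒱).symm
          · exact h2 s hs𝒱 t ht𝒱 hst
      have hsub : insert W 𝒱 ⊆ 𝒱 := h𝒱.2 hWint (Set.subset_insert _ _)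
      have hW𝒱 : W ∈ 𝒱 := hsub (Set.mem_insert _ _)
      obtain ⟨x₀, hx₀⟩ := hW.1
      have hmemx : x₀ ∈ ES W ∩ ES W := ⟨hx₀, hx₀⟩
      have hemp : ES W ∩ ES W = ∅ := hcon W hW𝒱
      exact absurd hmemx (by simp [hemp])
  choose 𝒱 h𝒱S h𝒱disj h𝒱max using hmax
  have h𝒱count : ∀ n, (𝒱 n).Countable := by
    intro n
    apply countable_incomp Disj
    · intro s hs γ v w hv hw
      obtain ⟨x₀, hx₀⟩ := (h𝒱S n hs).1
      exact not_disj_of_mem hx₀ hv hw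
    · intro s hs t ht hst
      by_contra h
      push_neg at h
      obtain ⟨x₀, hx₀⟩ := (h𝒱S n hs).1
      obtain ⟨y₀, hy₀⟩ := (h𝒱S n ht).1
      obtain ⟨z₀, hz₀⟩ := compat_inter hx₀ hy₀ h
      have hfalse : z₀ ∈ (∅ : Set (Γ → ℝ)) :=
        Set.disjoint_iff_inter_eq_empty.1 (h𝒱disj n s hs t ht hst) ▸ hz₀
      exact hfalse
  set A : Set Γ := ⋃ n : ℕ, ⋃ s ∈ 𝒱 n, ↑(s.image Prod.fst) with hA
  have hAcount : A.Countable := Set.countable_iUnion fun n =>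
    Set.Countable.biUnion (h𝒱count n) fun s _ => (s.image Prod.fst).countable_toSet
  have hAmem : ∀ n, ∀ s ∈ 𝒱 n, ∀ e ∈ s, e.1 ∈ A := by
    intro n s hs e he
    refine Set.mem_iUnion.2 ⟨n, Set.mem_biUnion hs ?_⟩
    exact Finset.mem_coe.2 (Finset.mem_image.2 ⟨e, he, rfl⟩)
  have main : ∀ x : Γ → ℝ, g x = g (fun γ => if γ ∈ A then x γ else 0) := by
    intro x
    set rx : Γ → ℝ := fun γ => if γ ∈ A then x γ else 0 with hrx
    have key : ∀ n : ℕ, |g x - g rx| ≤ 3 * ((n : ℝ) + 1)⁻¹ := by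
      intro n
      have hpos : (0 : ℝ) < ((n : ℝ) + 1)⁻¹ := by positivity
      have hhalf : (0 : ℝ) < ((n : ℝ) + 1)⁻¹ / 2 := by positivity
      obtain ⟨U, hxU, hU⟩ := exists_cond hg x hhalf
      obtain ⟨U', hrxU', hU'⟩ := exists_cond hg rx hhalf
      have hUosc : ∀ y ∈ ES U, ∀ z ∈ ES U, |g y - g z| ≤ ((n : ℝ) + 1)⁻¹ := by
        intro y hy z hz
        have h1 := hU y hy
        have h2 := hU z hz
        have h3 := abs_sub_le (g y) (g x) (g z)
        rw [abs_sub_comm (g x) (g z)] at h3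
        linarith
      have hU'osc : ∀ y ∈ ES U', ∀ z ∈ ES U', |g y - g z| ≤ ((n : ℝ) + 1)⁻¹ := by
        intro y hy z hz
        have h1 := hU' y hy
        have h2 := hU' z hz
        have h3 := abs_sub_le (g y) (g rx) (g z)
        rw [abs_sub_comm (g rx) (g z)] at h3
        linarith
      set W : Finset (Γ × Vt) :=
        U ∪ U'.filter (fun e => e.1 ∈ A ∨ e.1 ∉ U.image Prod.fst) with hW
      set w : Γ → ℝ := fun γ => if γ ∈ U.image Prod.fst ∨ γ ∈ A then x γ else 0 with hw
      have hwW : w ∈ ES W := by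
        intro e he
        rcases Finset.mem_union.1 he with heU | heF
        · have h1 := hxU e heU
          have : w e.1 = x e.1 := by
            simp only [hw]
            exact if_pos (Or.inl (Finset.mem_image.2 ⟨e, heU, rfl⟩))
          rw [this]
          exact h1
        · obtain ⟨heU', hcond⟩ := Finset.mem_filter.1 heF
          have h1 := hrxU' e heU'
          have : w e.1 = rx e.1 := by
            by_cases hA1 : e.1 ∈ A
            · simp only [hw, hrx]
              rw [if_pos (Or.inr hA1), if_pos hA1]
            · have hnim : e.1 ∉ U.image Prod.fst := hcond.resolve_left hA1
              have hcnd : ¬ (e.1 ∈ U.image Prod.fst ∨ e.1 ∈ A) := by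
                rintro (h | h)
                exacts [hnim h, hA1 h]
              simp only [hw, hrx]
              rw [if_neg hcnd, if_neg hA1]
          rw [this]
          exact h1
      have hWS : W ∈ S n := by
        refine ⟨⟨w, hwW⟩, ?_⟩
        intro y hy z hz
        exact hUosc y (ES_anti Finset.subset_union_left hy)
          z (ES_anti Finset.subset_union_left hz)
      obtain ⟨V, hV, hne⟩ := h𝒱max n W hWS
      obtain ⟨p, hpW, hpV⟩ := hne
      have hVS : V ∈ S n := h𝒱S n hV
      set q : Γ → ℝ := fun γ => if γ ∈ V.image Prod.fst then p γ else rx γ with hq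
      have hqV : q ∈ ES V := by
        intro e he
        have : q e.1 = p e.1 := by
          simp only [hq]
          exact if_pos (Finset.mem_image.2 ⟨e, he, rfl⟩)
        rw [this]
        exact hpV e he
      have hqU' : q ∈ ES U' := by
        intro e he
        by_cases him : e.1 ∈ V.image Prod.fst
        · have hqe : q e.1 = p e.1 := by simp only [hq]; exact if_pos him
          have hA1 : e.1 ∈ A := by
            obtain ⟨e', he', heq⟩ := Finset.mem_image.1 him
            exact heq ▸ hAmem n V hV e' he'
          have heW : e ∈ W := by
            rw [hW]
            exact Finset.mem_union_right _ (Finset.mem_filter.2 ⟨he, Or.inl hA1⟩)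
          rw [hqe]
          exact hpW e heW
        · have hqe : q e.1 = rx e.1 := by simp only [hq]; exact if_neg him
          rw [hqe]
          exact hrxU' e he
      have c1 : |g x - g p| ≤ ((n : ℝ) + 1)⁻¹ :=
        hUosc x hxU p (ES_anti Finset.subset_union_left hpW)
      have c2 : |g p - g q| ≤ ((n : ℝ) + 1)⁻¹ := hVS.2 p hpV q hqV
      have c3 : |g q - g rx| ≤ ((n : ℝ) + 1)⁻¹ := hU'osc q hqU' rx hrxU'
      have t1 := abs_sub_le (g x) (g p) (g rx)
      have t2 := abs_sub_le (g p) (g q) (g rx)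
      linarith
    have htend : Filter.Tendsto (fun n : ℕ => 3 * ((n : ℝ) + 1)⁻¹)
        Filter.atTop (nhds 0) := by
      have := tendsto_one_div_add_atTop_nhds_zero_nat (𝕜 := ℝ)
      have h3 := this.const_mul (3 : ℝ)
      simpa [one_div] using h3
    have habs : |g x - g rx| ≤ 0 := ge_of_tendsto' htend key
    have : g x - g rx = 0 := abs_eq_zero.1 (le_antisymm habs (abs_nonneg _))
    linarith [this]
  refine ⟨A, hAcount, ?_⟩
  intro x y hxy
  have hfun : (fun γ => if γ ∈ A then x γ else 0) = (fun γ => if γ ∈ A then y γ else 0) := by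
    funext γ
    by_cases h : γ ∈ A
    · rw [if_pos h, if_pos h]
      exact hxy γ h
    · rw [if_neg h, if_neg h]
  rw [main x, main y, hfun]

end Proof11

/-- `X` is C-embedded in `ℝ^Γ`: every continuous real-valued function on `X` extends
to a continuous real-valued function on `ℝ^Γ`. -/
def CEmbedded {Γ : Type u} (X : Set (Γ → ℝ)) : Prop :=
  ∀ f : ↥X → ℝ, Continuous f →
    ∃ g : (Γ → ℝ) → ℝ, Continuous g ∧ ∀ x : ↥X, g ↑x = f x

/-- Let `X ⊆ ℝ^Γ` be C-embedded in `ℝ^Γ`, let `τ` be an infinite cardinal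
(the cardinality of the index type `ι`), and let `φ : X → ℝ^τ` be continuous. Then there
is `B ⊆ Γ` with `|B| ≤ τ` such that `φ` factors through the restricted projection
`π_B|X : X → π_B(X)` via a continuous map `h : π_B(X) → ℝ^τ`. -/
theorem factors_through_projection {Γ : Type u} {ι : Type v} [Infinite ι]
    (X : Set (Γ → ℝ)) (hX : CEmbedded X) (φ : ↥X → ι → ℝ) (hφ : Continuous φ) :
    ∃ B : Set Γ,
      Cardinal.lift.{v} (Cardinal.mk ↥B) ≤ Cardinal.lift.{u} (Cardinal.mk ι) ∧
      ∃ h : ↥(Set.range fun x : ↥X => fun b : ↥B => (x : Γ → ℝ) b) → ι → ℝ,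
        Continuous h ∧
        ∀ x : ↥X, φ x = h ⟨fun b => (x : Γ → ℝ) b, Set.mem_range_self x⟩ := by
  classical
  choose g hgc hgx using fun i : ι => hX (fun x => φ x i) ((continuous_apply i).comp hφ)
  choose A hAc hAdep using fun i : ι => Proof11.exists_countable_dep (g i) (hgc i)
  refine ⟨⋃ i, A i, ?_, ?_⟩
  · have h1 := Cardinal.mk_iUnion_le_lift (f := A)
    have h2 : (⨆ i, Cardinal.lift.{v} (Cardinal.mk ↥(A i))) ≤ Cardinal.aleph0 := by
      refine ciSup_le' fun i => ?_
      have h3 : Cardinal.mk ↥(A i) ≤ Cardinal.aleph0 := (hAc i).le_aleph0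
      calc Cardinal.lift.{v} (Cardinal.mk ↥(A i))
          ≤ Cardinal.lift.{v} Cardinal.aleph0 := Cardinal.lift_le.2 h3
        _ = Cardinal.aleph0 := Cardinal.lift_aleph0
    have h4 : Cardinal.aleph0 ≤ Cardinal.lift.{u} (Cardinal.mk ι) :=
      Cardinal.aleph0_le_lift.2 (Cardinal.aleph0_le_mk ι)
    calc Cardinal.lift.{v} (Cardinal.mk ↥(⋃ i, A i))
        ≤ Cardinal.lift.{u} (Cardinal.mk ι) * ⨆ i, Cardinal.lift.{v} (Cardinal.mk ↥(A i)) := h1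
      _ ≤ Cardinal.lift.{u} (Cardinal.mk ι) * Cardinal.aleph0 := mul_le_mul_right h2 _
      _ = Cardinal.lift.{u} (Cardinal.mk ι) := Cardinal.mul_aleph0_eq h4
  · set B : Set Γ := ⋃ i, A i with hB
    refine ⟨fun z i => g i (fun γ => if hγ : γ ∈ B then (z : ↥B → ℝ) ⟨γ, hγ⟩ else 0), ?_, ?_⟩
    · apply continuous_pi
      intro i
      apply (hgc i).comp
      apply continuous_pi
      intro γ
      by_cases hγ : γ ∈ B
      · simp only [dif_pos hγ]
        exact (continuous_apply _).comp continuous_subtype_val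
      · simp only [dif_neg hγ]
        exact continuous_const
    · intro x
      funext i
      show φ x i = g i (fun γ => if hγ : γ ∈ B then (x : Γ → ℝ) γ else 0)
      have hagree : ∀ γ ∈ A i,
          (fun γ => if hγ : γ ∈ B then (x : Γ → ℝ) γ else 0) γ = (x : Γ → ℝ) γ := by
        intro γ hγ
        have hγB : γ ∈ B := Set.mem_iUnion.2 ⟨i, hγ⟩
        simp only [dif_pos hγB]
      have hdep := hAdep i (fun γ => if hγ : γ ∈ B then (x : Γ → ℝ) γ else 0)
        (x : Γ → ℝ) hagree
      rw [hdep]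
      exact (hgx i x).symm
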